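/- Under the assumptions of the symmetrization lemma, $\tilde{f}_{v,m-v}(\mathbf{x}_m) = 0$ for every $\mathbf{x}_m \in D^m$ if and only if, for every weak $K$-composition $\mathbf{z}_K \in \mathcal{N}(m,K)$, $\sum_{(*)} \binom{v}{k_1,\ldots,k_{K-1}} \binom{m-v}{z_1-k_1,\ldots,z_{K-1}-k_{K-1}} f_{v,m-v}((k_1,\ldots,k_{K-1}),(z_1-k_1,\ldots,z_K-k_K)) = 0$, the sum running over all $(m,v,\mathbf{z}_K)$-coherent vectors. -/

import Mathlib

/-- The set of `(m,v,z)`-coherent occupation vectors: vectors `k : Fin K → ℕ` with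
`∑ kᵢ = v` and `kᵢ ≤ zᵢ` for all `i`. -/
def coherent (K v : ℕ) (z : Fin K → ℕ) : Finset (Fin K → ℕ) :=
  (Finset.Nat.antidiagonalTuple K v).filter fun k => ∀ i, k i ≤ z i

/-- The weight `(v choose k₁,…,k_{K-1}) ⋅ (m-v choose z₁-k₁,…,z_{K-1}-k_{K-1})`
attached to a coherent vector `k`. -/
def weight {K : ℕ} (z k : Fin K → ℕ) : ℕ :=
  Nat.multinomial Finset.univ k * Nat.multinomial Finset.univ (fun i => z i - k i)

open Finset

/-- filter card is invariant under precomposition with a permutation -/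
lemma aux_filter_comp {n : ℕ} (σ : Equiv.Perm (Fin n)) (q : Fin n → Prop) [DecidablePred q] :
    (univ.filter fun t => q (σ t)).card = (univ.filter fun t => q t).card := by
  rw [← Fintype.card_subtype, ← Fintype.card_subtype]
  exact Fintype.card_congr (σ.subtypeEquiv fun a => Iff.rfl)

/-- number of permutations carrying `x` to `w` -/
lemma aux_card_comp {ι : Type*} [Fintype ι] [DecidableEq ι] {n : ℕ} (x w : Fin n → ι)
    (h : ∀ i, (univ.filter fun t => x t = i).card = (univ.filter fun t => w t = i).card) :
    (univ.filter fun σ : Equiv.Perm (Fin n) => x ∘ σ = w).card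
      = ∏ i, ((univ.filter fun t => x t = i).card).factorial := by
  classical
  have e : ∀ c, { a : Fin n // w a = c } ≃ { b : Fin n // x b = c } := fun c =>
    Fintype.equivOfCardEq (by rw [Fintype.card_subtype, Fintype.card_subtype]; exact (h c).symm)
  set σ₀ : Equiv.Perm (Fin n) := Equiv.ofFiberEquiv e with hσ₀def
  have hσ₀ : ∀ a, x (σ₀ a) = w a := Equiv.ofFiberEquiv_map e
  have E : { σ : Equiv.Perm (Fin n) // x ∘ σ = w } ≃ { σ : Equiv.Perm (Fin n) // x ∘ σ = x } := by
    refine ⟨fun σ => ⟨σ₀ * σ.1⁻¹, ?_⟩, fun ρ => ⟨ρ.1⁻¹ * σ₀, ?_⟩, ?_, ?_⟩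
    · funext a
      have h1 : x (σ₀ (σ.1⁻¹ a)) = w (σ.1⁻¹ a) := hσ₀ _
      have h2 : w (σ.1⁻¹ a) = x a := by
        conv_rhs => rw [← σ.1.apply_symm_apply a]
        exact (congrFun σ.2 (σ.1⁻¹ a)).symm
      simpa [Equiv.Perm.mul_apply] using h1.trans h2
    · funext a
      have hρ : x (ρ.1⁻¹ (σ₀ a)) = x (σ₀ a) := by
        conv_rhs => rw [← ρ.1.apply_symm_apply (σ₀ a)]
        exact (congrFun ρ.2 (ρ.1⁻¹ (σ₀ a))).symm
      simpa [Equiv.Perm.mul_apply, hσ₀] using hρ.trans (hσ₀ a)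
    · intro σ; ext a; simp
    · intro ρ; ext a; simp
  rw [← Fintype.card_subtype, Fintype.card_congr E]
  have hst := DomMulAct.stabilizer_card x
  simp only [Fintype.card_subtype] at hst ⊢
  exact hst

lemma aux_card_lt {m v : ℕ} (hv : v ≤ m) :
    (univ.filter fun t : Fin m => (t : ℕ) < v).card = v := by
  have : (univ.filter fun t : Fin m => (t : ℕ) < v)
      = (univ : Finset (Fin v)).map (Fin.castLEEmb hv) := by
    ext i
    simp only [mem_filter, mem_univ, true_and, mem_map, Fin.castLEEmb_apply]
    constructor
    · intro hi; exact ⟨⟨i, hi⟩, rfl⟩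
    · rintro ⟨j, rfl⟩; exact j.2
  rw [this, Finset.card_map, Finset.card_univ, Fintype.card_fin]

lemma aux_exists_le {K : ℕ} (z : Fin K → ℕ) (v : ℕ) (h : v ≤ ∑ i, z i) :
    ∃ k : Fin K → ℕ, (∀ i, k i ≤ z i) ∧ ∑ i, k i = v := by
  induction v with
  | zero => exact ⟨0, fun i => Nat.zero_le _, by simp⟩
  | succ v ih =>
    obtain ⟨k, hk, hsum⟩ := ih (Nat.le_of_succ_le h)
    have hlt : ∑ i, k i < ∑ i, z i := by omega
    have hj : ∃ j, k j < z j := by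
      by_contra hc; push_neg at hc
      exact absurd (Finset.sum_le_sum fun i _ => hc i) (not_le.2 hlt)
    obtain ⟨j, hj⟩ := hj
    refine ⟨Function.update k j (k j + 1), fun i => ?_, ?_⟩
    · rcases eq_or_ne i j with rfl | hij
      · simpa using hj
      · simp [Function.update_of_ne hij, hk i]
    · rw [Finset.sum_update_of_mem (mem_univ j)]
      have := Finset.add_sum_erase univ k (mem_univ j)
      simp only [Finset.sdiff_singleton_eq_erase] at *
      omega


def cntF {m K : ℕ} (u : Fin m → Fin K) (j : Fin K) : ℕ :=
  (univ.filter fun t => u t = j).card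

def cntLo {m K : ℕ} (v : ℕ) (u : Fin m → Fin K) (j : Fin K) : ℕ :=
  (univ.filter fun t : Fin m => (t : ℕ) < v ∧ u t = j).card

def cntHi {m K : ℕ} (v : ℕ) (u : Fin m → Fin K) (j : Fin K) : ℕ :=
  (univ.filter fun t : Fin m => v ≤ (t : ℕ) ∧ u t = j).card

lemma cnt_split {m K v : ℕ} (u : Fin m → Fin K) (j : Fin K) :
    cntLo v u j + cntHi v u j = cntF u j := by
  rw [cntLo, cntHi, cntF, ← Finset.card_union_of_disjoint]
  · congr 1
    ext t
    simp only [mem_union, mem_filter, mem_univ, true_and]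
    constructor
    · rintro (⟨_, h⟩ | ⟨_, h⟩) <;> exact h
    · intro h
      rcases lt_or_ge (t : ℕ) v with hlt | hle
      · exact Or.inl ⟨hlt, h⟩
      · exact Or.inr ⟨hle, h⟩
  · rw [Finset.disjoint_left]
    intro t ht ht'
    simp only [mem_filter] at ht ht'
    omega

lemma cntF_sum {m K : ℕ} (u : Fin m → Fin K) : ∑ j, cntF u j = m := by
  have := Finset.card_eq_sum_card_fiberwise (f := u) (s := univ) (t := univ)
    (fun t _ => mem_univ _)
  simpa [cntF] using this.symm

lemma cntLo_sum {m K v : ℕ} (hv : v ≤ m) (u : Fin m → Fin K) :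
    ∑ j, cntLo v u j = v := by
  have h1 := Finset.card_eq_sum_card_fiberwise (f := u)
    (s := univ.filter fun t : Fin m => (t : ℕ) < v) (t := univ) (fun t _ => mem_univ _)
  rw [aux_card_lt hv] at h1
  have h2 : ∀ j, cntLo v u j
      = ((univ.filter fun t : Fin m => (t : ℕ) < v).filter fun t => u t = j).card := by
    intro j
    rw [cntLo, Finset.filter_filter]
  calc ∑ j, cntLo v u j
      = ∑ j, ((univ.filter fun t : Fin m => (t : ℕ) < v).filter fun t => u t = j).card :=
        Finset.sum_congr rfl fun j _ => h2 j
    _ = v := h1.symm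

lemma cntF_comp {m K : ℕ} (u : Fin m → Fin K) (σ : Equiv.Perm (Fin m)) (j : Fin K) :
    cntF (u ∘ ⇑σ) j = cntF u j := aux_filter_comp σ (fun t => u t = j)

lemma cntLo_comp_split {m K v : ℕ} (u : Fin m → Fin K) (τ : Equiv.Perm (Fin m))
    (hτ : ∀ t : Fin m, ((t : ℕ) < v ↔ ((τ t : ℕ) < v))) (j : Fin K) :
    cntLo v (u ∘ ⇑τ) j = cntLo v u j := by
  have h1 : (univ.filter fun t : Fin m => (t : ℕ) < v ∧ u (τ t) = j)
      = (univ.filter fun t : Fin m => ((τ t : ℕ) < v ∧ u (τ t) = j)) := by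
    ext t
    simp only [mem_filter, mem_univ, true_and, hτ t]
  rw [cntLo, cntLo]
  show (univ.filter fun t : Fin m => (t : ℕ) < v ∧ u (τ t) = j).card = _
  rw [h1]
  exact aux_filter_comp τ (fun s => (s : ℕ) < v ∧ u s = j)

lemma cntHi_comp_split {m K v : ℕ} (u : Fin m → Fin K) (τ : Equiv.Perm (Fin m))
    (hτ : ∀ t : Fin m, ((t : ℕ) < v ↔ ((τ t : ℕ) < v))) (j : Fin K) :
    cntHi v (u ∘ ⇑τ) j = cntHi v u j := by
  have hτ' : ∀ t : Fin m, (v ≤ (t : ℕ) ↔ v ≤ ((τ t : ℕ))) := by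
    intro t
    rw [← Nat.not_lt, ← Nat.not_lt, not_iff_not]
    exact hτ t
  have h1 : (univ.filter fun t : Fin m => v ≤ (t : ℕ) ∧ u (τ t) = j)
      = (univ.filter fun t : Fin m => (v ≤ (τ t : ℕ) ∧ u (τ t) = j)) := by
    ext t
    simp only [mem_filter, mem_univ, true_and, hτ' t]
  rw [cntHi, cntHi]
  show (univ.filter fun t : Fin m => v ≤ (t : ℕ) ∧ u (τ t) = j).card = _
  rw [h1]
  exact aux_filter_comp τ (fun s => v ≤ (s : ℕ) ∧ u s = j)

lemma cntPair {m K : ℕ} (v : ℕ) (u : Fin m → Fin K) (c : Bool × Fin K) :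
    (univ.filter fun t : Fin m => ((decide ((t : ℕ) < v)), u t) = c).card
      = if c.1 then cntLo v u c.2 else cntHi v u c.2 := by
  obtain ⟨b, j⟩ := c
  cases b
  · rw [if_neg (by simp), cntHi]
    congr 1
    ext t
    simp only [mem_filter, mem_univ, true_and, Prod.mk.injEq, decide_eq_false_iff_not,
      Nat.not_lt]
  · rw [if_pos rfl, cntLo]
    congr 1
    ext t
    simp only [mem_filter, mem_univ, true_and, Prod.mk.injEq, decide_eq_true_eq]

lemma aux_card_ge {m v : ℕ} (hv : v ≤ m) :
    (univ.filter fun t : Fin m => v ≤ (t : ℕ)).card = m - v := by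
  have h1 := Finset.card_filter_add_card_filter_not
    (s := (univ : Finset (Fin m))) (p := fun t : Fin m => (t : ℕ) < v)
  rw [aux_card_lt hv] at h1
  have h2 : (univ.filter fun t : Fin m => ¬ (t : ℕ) < v)
      = (univ.filter fun t : Fin m => v ≤ (t : ℕ)) := by
    ext t; simp [Nat.not_lt]
  rw [h2] at h1
  simp only [Finset.card_univ, Fintype.card_fin] at h1
  omega

lemma f_congr {K m v : ℕ} (f : (Fin m → Fin K) → ℝ)
    (hsym : ∀ σ : Equiv.Perm (Fin m),
      (∀ i : Fin m, ((i : ℕ) < v ↔ ((σ i : ℕ) < v))) → ∀ x, f (x ∘ σ) = f x)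
    (u u' : Fin m → Fin K) (hlo : ∀ j, cntLo v u j = cntLo v u' j)
    (hhi : ∀ j, cntHi v u j = cntHi v u' j) : f u = f u' := by
  have e : ∀ c : Bool × Fin K,
      { t : Fin m // ((decide ((t : ℕ) < v)), u' t) = c }
        ≃ { t : Fin m // ((decide ((t : ℕ) < v)), u t) = c } := by
    intro c
    apply Fintype.equivOfCardEq
    rw [Fintype.card_subtype, Fintype.card_subtype, cntPair, cntPair, hlo c.2, hhi c.2]
  set τ : Equiv.Perm (Fin m) := Equiv.ofFiberEquiv e with hτdef
  have hmap : ∀ a : Fin m, ((decide ((τ a : ℕ) < v)), u (τ a))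
      = ((decide ((a : ℕ) < v)), u' a) := Equiv.ofFiberEquiv_map e
  have hτ : ∀ t : Fin m, ((t : ℕ) < v ↔ ((τ t : ℕ) < v)) := by
    intro t
    have h := congrArg Prod.fst (hmap t)
    simp only at h
    exact (decide_eq_decide.mp h).symm
  have hu : u ∘ ⇑τ = u' := funext fun a => congrArg Prod.snd (hmap a)
  rw [← hu, hsym τ hτ u]

lemma main_count {K m v : ℕ} (hv : v ≤ m) (z k : Fin K → ℕ) (hz : ∑ i, z i = m)
    (hksum : ∑ i, k i = v) (hkle : ∀ i, k i ≤ z i) (w₀ : Fin m → Fin K)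
    (hw₀lo : ∀ j, cntLo v w₀ j = k j) (hw₀hi : ∀ j, cntHi v w₀ j = z j - k j) :
    (univ.filter fun w : Fin m → Fin K =>
        (∀ j, cntLo v w j = k j) ∧ (∀ j, cntHi v w j = z j - k j)).card = weight z k := by
  classical
  set W := univ.filter fun w : Fin m → Fin K =>
      (∀ j, cntLo v w j = k j) ∧ (∀ j, cntHi v w j = z j - k j) with hWdef
  set SP := univ.filter fun τ : Equiv.Perm (Fin m) =>
      ∀ t : Fin m, ((t : ℕ) < v ↔ ((τ t : ℕ) < v)) with hSPdef
  set q : Fin m → Bool := fun t => decide ((t : ℕ) < v) with hqdef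
  -- first count of SP
  have hSP1 : SP.card = v.factorial * (m - v).factorial := by
    have hq : SP = univ.filter fun τ : Equiv.Perm (Fin m) => q ∘ ⇑τ = q := by
      ext τ
      simp only [hSPdef, mem_filter, mem_univ, true_and, funext_iff, Function.comp_apply, hqdef,
        decide_eq_decide]
      exact ⟨fun h t => (h t).symm, fun h t => (h t).symm⟩
    rw [hq, aux_card_comp q q (fun i => rfl), Fintype.prod_bool]
    have htrue : (univ.filter fun t : Fin m => q t = true).card = v := by
      rw [← aux_card_lt hv]
      congr 1
      ext t
      simp [hqdef]
    have hfalse : (univ.filter fun t : Fin m => q t = false).card = m - v := by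
      rw [← aux_card_ge hv]
      congr 1
      ext t
      simp [hqdef, Nat.not_lt]
    rw [htrue, hfalse]
  -- second count of SP
  have hSP2 : SP.card = W.card * ((∏ j, (k j).factorial) * ∏ j, (z j - k j).factorial) := by
    have hmaps : ∀ τ ∈ SP, w₀ ∘ ⇑τ ∈ W := by
      intro τ hτ
      rw [hSPdef, mem_filter] at hτ
      rw [hWdef, mem_filter]
      exact ⟨mem_univ _, fun j => by rw [cntLo_comp_split w₀ τ hτ.2 j, hw₀lo j],
        fun j => by rw [cntHi_comp_split w₀ τ hτ.2 j, hw₀hi j]⟩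
    rw [Finset.card_eq_sum_card_fiberwise hmaps]
    have hfib : ∀ w ∈ W, (SP.filter fun τ : Equiv.Perm (Fin m) => w₀ ∘ ⇑τ = w).card
        = (∏ j, (k j).factorial) * ∏ j, (z j - k j).factorial := by
      intro w hw
      rw [hWdef, mem_filter] at hw
      have hfil : (SP.filter fun τ : Equiv.Perm (Fin m) => w₀ ∘ ⇑τ = w)
          = univ.filter fun τ : Equiv.Perm (Fin m) =>
              (fun t : Fin m => ((decide ((t : ℕ) < v)), w₀ t)) ∘ ⇑τ
                = fun t : Fin m => ((decide ((t : ℕ) < v)), w t) := by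
        ext τ
        simp only [hSPdef, mem_filter, mem_univ, true_and, funext_iff, Function.comp_apply]
        constructor
        · rintro ⟨hτ, hwe⟩ t
          rw [Prod.mk.injEq]
          exact ⟨decide_eq_decide.mpr (hτ t).symm, hwe t⟩
        · intro h
          constructor
          · intro t
            have := congrArg Prod.fst (h t)
            simp only at this
            exact (decide_eq_decide.mp this).symm
          · intro t
            exact congrArg Prod.snd (h t)
      rw [hfil]
      have hcnt : ∀ c : Bool × Fin K,
          (univ.filter fun t : Fin m => ((decide ((t : ℕ) < v)), w₀ t) = c).card
            = (univ.filter fun t : Fin m => ((decide ((t : ℕ) < v)), w t) = c).card := by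
        intro c
        rw [cntPair, cntPair, hw.2.1 c.2, hw.2.2 c.2, hw₀lo c.2, hw₀hi c.2]
      rw [aux_card_comp _ _ hcnt, Fintype.prod_prod_type, Fintype.prod_bool]
      congr 1
      · exact Finset.prod_congr rfl fun j _ => by rw [cntPair]; simp [hw₀lo j]
      · exact Finset.prod_congr rfl fun j _ => by rw [cntPair]; simp [hw₀hi j]
    rw [Finset.sum_congr rfl hfib, Finset.sum_const, smul_eq_mul]
  -- the multinomial identity
  have hzk : ∑ i, (z i - k i) = m - v := by
    have h₁ : ∑ i, (z i - k i) + ∑ i, k i = ∑ i, z i := by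
      rw [← Finset.sum_add_distrib]
      exact Finset.sum_congr rfl fun i _ => by have := hkle i; omega
    omega
  have hW : weight z k * ((∏ j, (k j).factorial) * ∏ j, (z j - k j).factorial)
      = v.factorial * (m - v).factorial := by
    have s1 := Nat.multinomial_spec (univ : Finset (Fin K)) k
    have s2 := Nat.multinomial_spec (univ : Finset (Fin K)) (fun i => z i - k i)
    rw [hksum] at s1
    rw [hzk] at s2
    calc weight z k * ((∏ j, (k j).factorial) * ∏ j, (z j - k j).factorial)
        = ((∏ j, (k j).factorial) * Nat.multinomial univ k)
          * ((∏ j, (z j - k j).factorial) * Nat.multinomial univ (fun i => z i - k i)) := by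
          rw [weight]; ring
      _ = v.factorial * (m - v).factorial := by rw [s1, s2]
  have hpos : 0 < (∏ j, (k j).factorial) * ∏ j, (z j - k j).factorial :=
    Nat.mul_pos (Finset.prod_pos fun i _ => Nat.factorial_pos _)
      (Finset.prod_pos fun i _ => Nat.factorial_pos _)
  exact Nat.eq_of_mul_eq_mul_right hpos (by rw [← hSP2, hSP1, hW])

lemma key_sum {K m v : ℕ} (hv : v ≤ m) (f : (Fin m → Fin K) → ℝ)
    (hsym : ∀ σ : Equiv.Perm (Fin m),
      (∀ i : Fin m, ((i : ℕ) < v ↔ ((σ i : ℕ) < v))) → ∀ x, f (x ∘ σ) = f x)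
    (z : Fin K → ℕ) (hz : ∑ i, z i = m)
    (y0 : (Fin K → ℕ) → Fin m → Fin K)
    (hy0 : ∀ k ∈ coherent K v z,
      (∀ j, cntLo v (y0 k) j = k j) ∧ (∀ j, cntHi v (y0 k) j = z j - k j))
    (x : Fin m → Fin K) (hx : ∀ j, cntF x j = z j) :
    ∑ σ : Equiv.Perm (Fin m), f (x ∘ ⇑σ)
      = ((∏ j, (z j).factorial : ℕ) : ℝ)
        * ∑ k ∈ coherent K v z, (weight z k : ℝ) * f (y0 k) := by
  classical
  have hmaps : ∀ σ ∈ (univ : Finset (Equiv.Perm (Fin m))),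
      (fun j => cntLo v (x ∘ ⇑σ) j) ∈ coherent K v z := by
    intro σ _
    rw [coherent, mem_filter, Finset.Nat.mem_antidiagonalTuple]
    refine ⟨cntLo_sum hv (x ∘ ⇑σ), fun i => ?_⟩
    show cntLo v (x ∘ ⇑σ) i ≤ z i
    have h1 := cnt_split (v := v) (x ∘ ⇑σ) i
    have h2 : cntF (x ∘ ⇑σ) i = z i := by rw [cntF_comp, hx]
    omega
  rw [← Finset.sum_fiberwise_of_maps_to
    (g := fun σ : Equiv.Perm (Fin m) => fun j => cntLo v (x ∘ ⇑σ) j) hmaps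
    (fun σ => f (x ∘ ⇑σ)), Finset.mul_sum]
  refine Finset.sum_congr rfl fun k hk => ?_
  have hkmem := hk
  rw [coherent, mem_filter, Finset.Nat.mem_antidiagonalTuple] at hkmem
  have hksum : ∑ i, k i = v := hkmem.1
  have hkle : ∀ i, k i ≤ z i := hkmem.2
  obtain ⟨hylo, hyhi⟩ := hy0 k hk
  have hconst : ∀ σ ∈ univ.filter
      (fun σ : Equiv.Perm (Fin m) => (fun j => cntLo v (x ∘ ⇑σ) j) = k),
      f (x ∘ ⇑σ) = f (y0 k) := by
    intro σ hσ
    rw [mem_filter] at hσ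
    have hlo : ∀ j, cntLo v (x ∘ ⇑σ) j = k j := fun j => congrFun hσ.2 j
    apply f_congr f hsym
    · intro j; rw [hlo j, hylo j]
    · intro j
      have h1 := cnt_split (v := v) (x ∘ ⇑σ) j
      have h2 : cntF (x ∘ ⇑σ) j = z j := by rw [cntF_comp, hx]
      have h3 := hlo j
      rw [hyhi j]
      omega
  rw [Finset.sum_congr rfl hconst, Finset.sum_const, nsmul_eq_mul]
  have hcard : (univ.filter
      fun σ : Equiv.Perm (Fin m) => (fun j => cntLo v (x ∘ ⇑σ) j) = k).card
      = weight z k * ∏ j, (z j).factorial := by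
    set W := univ.filter fun w : Fin m → Fin K =>
      (∀ j, cntLo v w j = k j) ∧ (∀ j, cntHi v w j = z j - k j) with hWdef
    have hm2 : ∀ σ ∈ (univ.filter
        fun σ : Equiv.Perm (Fin m) => (fun j => cntLo v (x ∘ ⇑σ) j) = k), x ∘ ⇑σ ∈ W := by
      intro σ hσ
      rw [mem_filter] at hσ
      have hlo : ∀ j, cntLo v (x ∘ ⇑σ) j = k j := fun j => congrFun hσ.2 j
      rw [hWdef, mem_filter]
      refine ⟨mem_univ _, hlo, fun j => ?_⟩
      have h1 := cnt_split (v := v) (x ∘ ⇑σ) j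
      have h2 : cntF (x ∘ ⇑σ) j = z j := by rw [cntF_comp, hx]
      have h3 := hlo j
      omega
    rw [Finset.card_eq_sum_card_fiberwise hm2]
    have hfib : ∀ w ∈ W, ((univ.filter
        fun σ : Equiv.Perm (Fin m) => (fun j => cntLo v (x ∘ ⇑σ) j) = k).filter
          fun σ : Equiv.Perm (Fin m) => x ∘ ⇑σ = w).card = ∏ j, (z j).factorial := by
      intro w hw
      rw [hWdef, mem_filter] at hw
      have hfil : ((univ.filter
          fun σ : Equiv.Perm (Fin m) => (fun j => cntLo v (x ∘ ⇑σ) j) = k).filter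
            fun σ : Equiv.Perm (Fin m) => x ∘ ⇑σ = w)
          = univ.filter fun σ : Equiv.Perm (Fin m) => x ∘ ⇑σ = w := by
        ext σ
        simp only [Finset.filter_filter, mem_filter, mem_univ, true_and]
        constructor
        · exact fun h => h.2
        · intro h
          refine ⟨funext fun j => ?_, h⟩
          rw [show x ∘ ⇑σ = w from h, hw.2.1 j]
      rw [hfil, aux_card_comp x w (fun i => ?_)]
      · exact Finset.prod_congr rfl fun j _ => by
          rw [show (univ.filter fun t => x t = j).card = cntF x j from rfl, hx j]
      · have h1 := cnt_split (v := v) w i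
        have h2 := hw.2.1 i
        have h3 := hw.2.2 i
        have h4 := hkle i
        rw [show (univ.filter fun t => x t = i).card = cntF x i from rfl, hx i]
        rw [show (univ.filter fun t => w t = i).card = cntF w i from rfl]
        omega
    rw [Finset.sum_congr rfl hfib, Finset.sum_const, smul_eq_mul,
      main_count hv z k hz hksum hkle (y0 k) hylo hyhi]
  rw [hcard]
  push_cast
  ring

/-- Equation (sedici_K): under the assumptions of the symmetrization lemma, the canonical
symmetrization `f̃` vanishes identically on `D^m` if and only if, for every weak
`K`-composition `z` of `m`, the weighted sum over `(m,v,z)`-coherent vectors `k` of the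
common values `f_{v,m-v}(k, z-k)` vanishes; here `y z k` is any vector whose first `v`
coordinates contain `kᵢ` entries equal to `dᵢ` and whose last `m-v` coordinates contain
`zᵢ-kᵢ` entries equal to `dᵢ`. -/
theorem symmetrization_vanishes_iff (K m v : ℕ) (hK : 1 ≤ K) (hm : 2 ≤ m)
    (hv1 : 1 ≤ v) (hvm : v ≤ m - 1)
    (f : (Fin m → Fin K) → ℝ)
    (hsym : ∀ σ : Equiv.Perm (Fin m),
      (∀ i : Fin m, ((i : ℕ) < v ↔ ((σ i : ℕ) < v))) → ∀ x, f (x ∘ σ) = f x)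
    (y : (Fin K → ℕ) → (Fin K → ℕ) → Fin m → Fin K)
    (hy : ∀ z : Fin K → ℕ, ∑ i, z i = m → ∀ k ∈ coherent K v z,
      (∀ j, (Finset.univ.filter fun t : Fin m => (t : ℕ) < v ∧ y z k t = j).card = k j) ∧
      (∀ j, (Finset.univ.filter fun t : Fin m => v ≤ (t : ℕ) ∧ y z k t = j).card = z j - k j)) :
    (∀ x : Fin m → Fin K, ((1 : ℝ) / m.factorial) * ∑ σ : Equiv.Perm (Fin m), f (x ∘ σ) = 0)
      ↔ ∀ z : Fin K → ℕ, ∑ i, z i = m →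
        ∑ k ∈ coherent K v z, (weight z k : ℝ) * f (y z k) = 0 := by
  classical
  have hv : v ≤ m := le_trans hvm (Nat.sub_le m 1)
  have hy' : ∀ z : Fin K → ℕ, ∑ i, z i = m → ∀ k ∈ coherent K v z,
      (∀ j, cntLo v (y z k) j = k j) ∧ (∀ j, cntHi v (y z k) j = z j - k j) := hy
  have hmfact : ((m.factorial : ℝ)) ≠ 0 := Nat.cast_ne_zero.mpr (Nat.factorial_ne_zero m)
  constructor
  · intro h z hz
    obtain ⟨k₀, hk₀le, hk₀sum⟩ := aux_exists_le z v (by rw [hz]; exact hv)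
    have hk₀ : k₀ ∈ coherent K v z := by
      rw [coherent, mem_filter, Finset.Nat.mem_antidiagonalTuple]
      exact ⟨hk₀sum, hk₀le⟩
    obtain ⟨hxlo, hxhi⟩ := hy' z hz k₀ hk₀
    have hx : ∀ j, cntF (y z k₀) j = z j := by
      intro j
      have h1 := cnt_split (v := v) (y z k₀) j
      have h2 := hxlo j
      have h3 := hxhi j
      have h4 := hk₀le j
      omega
    have hkey := key_sum hv f hsym z hz (y z) (hy' z hz) (y z k₀) hx
    have h0 := h (y z k₀)
    rw [hkey] at h0
    have hprod : ((∏ j, (z j).factorial : ℕ) : ℝ) ≠ 0 := by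
      have : 0 < ∏ j, (z j).factorial := Finset.prod_pos fun i _ => Nat.factorial_pos _
      exact_mod_cast Nat.pos_iff_ne_zero.mp this
    have h1 : ((∏ j, (z j).factorial : ℕ) : ℝ)
        * ∑ k ∈ coherent K v z, (weight z k : ℝ) * f (y z k) = 0 := by
      have := mul_eq_zero.mp h0
      rcases this with h' | h'
      · exact absurd h' (by simp [hmfact])
      · exact h'
    rcases mul_eq_zero.mp h1 with h' | h'
    · exact absurd h' hprod
    · exact h'

  · intro h x
    have hz := cntF_sum x
    have hkey := key_sum hv f hsym (cntF x) hz (y (cntF x)) (hy' (cntF x) hz) x (fun j => rfl)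
    rw [hkey, h (cntF x) hz, mul_zero, mul_zero]
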